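/- arXiv:1206.2385 — 2 statements merged into one kernel-verified Lean document; each statement's English description precedes it below -/
import Mathlib

section
/- If U, U', V, V' are real-valued random vectors with V, V' taking values in ℝ^l, U, U' real-valued, and λ ∈ ℝ^l, then |1{U < V·λ} - 1{U' < V'·λ}| ≤ 1{|U - V·λ| ≤ |U - U'|} + 1{|U' - V'·λ| ≤ |λ||V - V'|} pointwise, where |·| denotes the Euclidean norm. -/
theorem indicator_inner_pointwise_bound
    {Ω : Type*} {l : ℕ}
    (U U' : Ω → ℝ) (V V' : Ω → EuclideanSpace ℝ (Fin l))
    (lam : EuclideanSpace ℝ (Fin l)) (ω : Ω) :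
    |(if U ω < (inner ℝ (V ω) lam : ℝ) then (1:ℝ) else 0)
      - (if U' ω < (inner ℝ (V' ω) lam : ℝ) then (1:ℝ) else 0)|
    ≤ (if |U ω - (inner ℝ (V ω) lam : ℝ)| ≤ |U ω - U' ω| then (1:ℝ) else 0)
      + (if |U' ω - (inner ℝ (V' ω) lam : ℝ)| ≤ ‖lam‖ * ‖V ω - V' ω‖ then (1:ℝ) else 0) := by
  set a := U ω with ha
  set a' := U' ω with ha'
  set b : ℝ := inner ℝ (V ω) lam with hb
  set b' : ℝ := inner ℝ (V' ω) lam with hb'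
  have hcs : |b - b'| ≤ ‖lam‖ * ‖V ω - V' ω‖ := by
    have h := abs_real_inner_le_norm (V ω - V' ω) lam
    rw [inner_sub_left] at h
    calc |b - b'| ≤ ‖V ω - V' ω‖ * ‖lam‖ := h
      _ = ‖lam‖ * ‖V ω - V' ω‖ := mul_comm _ _
  have f1 : a' - a ≤ |a - a'| := by rw [abs_sub_comm]; exact le_abs_self _
  have f2 : a - a' ≤ |a - a'| := le_abs_self _
  have f3 : b - b' ≤ |b - b'| := le_abs_self _
  have f4 : b' - b ≤ |b - b'| := by rw [abs_sub_comm]; exact le_abs_self _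
  have hnn : (0:ℝ) ≤ (if |a - b| ≤ |a - a'| then (1:ℝ) else 0) := by positivity
  have hnn' : (0:ℝ) ≤ (if |a' - b'| ≤ ‖lam‖ * ‖V ω - V' ω‖ then (1:ℝ) else 0) := by
    positivity
  by_cases h1 : a < b <;> by_cases h2 : a' < b' <;> simp [h1, h2] <;> try linarith
  · rcases le_or_gt |a - b| |a - a'| with hA | hA
    · rw [if_pos hA]; linarith
    · have e1 : |a - b| = b - a := by rw [abs_of_neg (by linarith)]; ring
      rw [e1] at hA
      have hB : |a' - b'| ≤ ‖lam‖ * ‖V ω - V' ω‖ := by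
        by_contra hB
        push_neg at hB
        have e2 : |a' - b'| = a' - b' := abs_of_nonneg (by linarith)
        rw [e2] at hB
        linarith
      rw [if_pos hB]; linarith
  · rcases le_or_gt |a - b| |a - a'| with hA | hA
    · rw [if_pos hA]; linarith
    · have e1 : |a - b| = a - b := abs_of_nonneg (by linarith)
      rw [e1] at hA
      have hB : |a' - b'| ≤ ‖lam‖ * ‖V ω - V' ω‖ := by
        by_contra hB
        push_neg at hB
        have e2 : |a' - b'| = b' - a' := by rw [abs_of_neg (by linarith)]; ring
        rw [e2] at hB
        linarith
      rw [if_pos hB]; linarith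
end

section
/- Let X be a real random variable whose distribution function F is Lipschitz on an interval containing the compact set Θ. Then for any δ > 0, the class 𝓕 = {f_θ : θ ∈ Θ} with f_θ(x,y) = (α - 1{x < θ})(α - 1{y < θ}) has bracketing number N(δ, 𝓕) = O(δ^{-2}) as δ → 0, with respect to ρ(f) = ‖f(X₀,X₁)‖₂ where X₀, X₁ each have distribution F. -/
open MeasureTheory

section Aux
variable {Ω : Type*} [MeasurableSpace Ω]

lemma measure_bound_of_subset (P : Measure Ω) [IsProbabilityMeasure P]
    (X : Ω → ℝ) (a β : ℝ) (hab : a ≤ β) (K : Set Ω) (hK : MeasurableSet K)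
    (hsub : K ⊆ {ω | a < X ω ∧ X ω < β}) :
    (P K).toReal ≤ (P {ω | X ω ≤ β}).toReal - (P {ω | X ω ≤ a}).toReal := by
  have hsplit := measure_inter_add_diff (μ := P) ({ω | X ω ≤ a} ∪ K) hK
  have h1 : ({ω | X ω ≤ a} ∪ K) ∩ K = K := by
    ext ω; simp (config := {contextual := true}) [Set.mem_inter_iff]
  have h2 : ({ω | X ω ≤ a} ∪ K) \ K = {ω | X ω ≤ a} := by
    rw [Set.union_diff_right]
    ext ω
    simp only [Set.mem_diff, Set.mem_setOf_eq, and_iff_left_iff_imp]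
    intro h hk
    exact absurd (hsub hk).1 (not_lt.mpr h)
  rw [h1, h2] at hsplit
  have hle : P ({ω | X ω ≤ a} ∪ K) ≤ P {ω | X ω ≤ β} := by
    apply measure_mono
    rintro ω (h | h)
    · exact le_trans h hab
    · exact le_of_lt (hsub h).2
  rw [← hsplit] at hle
  have hKt : P K ≠ ⊤ := measure_ne_top P K
  have hat : P {ω | X ω ≤ a} ≠ ⊤ := measure_ne_top P _
  have := ENNReal.toReal_mono (measure_ne_top P _) hle
  rw [ENNReal.toReal_add hKt hat] at this
  linarith

lemma integral_indicator_bound (P : Measure Ω) [IsProbabilityMeasure P]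
    (X : Ω → ℝ) (a β : ℝ) (hab : a ≤ β)
    (hu : AEMeasurable (fun ω => if a < X ω ∧ X ω < β then (1:ℝ) else 0) P) :
    ∫ ω, (if a < X ω ∧ X ω < β then (1:ℝ) else 0) ∂P
      ≤ (P {ω | X ω ≤ β}).toReal - (P {ω | X ω ≤ a}).toReal := by
  classical
  set u : Ω → ℝ := fun ω => if a < X ω ∧ X ω < β then (1:ℝ) else 0 with hudef
  have hnull : P {ω | ¬ u ω = hu.mk u ω} = 0 := ae_iff.1 hu.ae_eq_mk
  obtain ⟨Z, hZsub, hZm, hZ0⟩ := exists_measurable_superset_of_null hnull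
  set K₀ : Set Ω := hu.mk u ⁻¹' Set.Ici ((1:ℝ)/2) with hK₀def
  have hK₀m : MeasurableSet K₀ := hu.measurable_mk measurableSet_Ici
  have hKm : MeasurableSet (K₀ \ Z) := hK₀m.diff hZm
  have hKsub : K₀ \ Z ⊆ {ω | a < X ω ∧ X ω < β} := by
    rintro ω ⟨h1, h2⟩
    have heq : u ω = hu.mk u ω := by
      by_contra hc
      exact h2 (hZsub hc)
    by_contra hc
    have : u ω = 0 := if_neg hc
    rw [heq] at this
    have : (1:ℝ)/2 ≤ 0 := this ▸ h1
    linarith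
  have hle : u ≤ᵐ[P] K₀.indicator (fun _ => (1:ℝ)) := by
    filter_upwards [hu.ae_eq_mk] with ω hω
    by_cases hc : a < X ω ∧ X ω < β
    · have hu1 : u ω = 1 := if_pos hc
      have : ω ∈ K₀ := by
        simp only [hK₀def, Set.mem_preimage, Set.mem_Ici, ← hω, hu1]
        norm_num
      rw [hu1, Set.indicator_of_mem this]
    · have : u ω = 0 := if_neg hc
      rw [this]
      exact Set.indicator_nonneg (fun _ _ => zero_le_one) ω
  have hint : ∫ ω, u ω ∂P ≤ (P K₀).toReal := by
    have := integral_mono_of_nonneg (f := u) (g := K₀.indicator (fun _ => (1:ℝ)))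
      (Filter.Eventually.of_forall fun ω => by
        simp only [hudef]; split_ifs <;> norm_num)
      ((integrable_const (1:ℝ)).indicator hK₀m) hle
    rwa [integral_indicator_const (1:ℝ) hK₀m, smul_eq_mul, mul_one] at this
  have hPK : P (K₀ \ Z) = P K₀ := measure_diff_null hZ0
  have := measure_bound_of_subset P X a β hab (K₀ \ Z) hKm hKsub
  rw [hPK] at this
  exact le_trans hint this

lemma bracket_integral_bound (P : Measure Ω) [IsProbabilityMeasure P]
    (X₀ X₁ : Ω → ℝ) (a β : ℝ) (hab : a ≤ β) :
    ∫ ω, ((if a < X₀ ω ∧ X₀ ω < β then (1:ℝ) else 0)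
        + 2 * (if a < X₁ ω ∧ X₁ ω < β then (1:ℝ) else 0))^2 ∂P
      ≤ 2 * ((P {ω | X₀ ω ≤ β}).toReal - (P {ω | X₀ ω ≤ a}).toReal)
      + 8 * ((P {ω | X₁ ω ≤ β}).toReal - (P {ω | X₁ ω ≤ a}).toReal) := by
  classical
  set u : Ω → ℝ := fun ω => if a < X₀ ω ∧ X₀ ω < β then (1:ℝ) else 0 with hudef
  set v : Ω → ℝ := fun ω => if a < X₁ ω ∧ X₁ ω < β then (1:ℝ) else 0 with hvdef
  set g : Ω → ℝ := fun ω => (u ω + 2 * v ω)^2 with hgdef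
  have hΔ0 : (P {ω | X₀ ω ≤ a}).toReal ≤ (P {ω | X₀ ω ≤ β}).toReal :=
    ENNReal.toReal_mono (measure_ne_top P _) (measure_mono fun ω h => le_trans h hab)
  have hΔ1 : (P {ω | X₁ ω ≤ a}).toReal ≤ (P {ω | X₁ ω ≤ β}).toReal :=
    ENNReal.toReal_mono (measure_ne_top P _) (measure_mono fun ω h => le_trans h hab)
  by_cases hg : AEStronglyMeasurable g P
  · -- measurable case
    have hgm : AEMeasurable g P := hg.aemeasurable
    have hsor : ∀ p q : ℝ, MeasurableSet {s : ℝ | s = p ∨ s = q} := by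
      intro p q
      have : {s : ℝ | s = p ∨ s = q} = {p} ∪ {q} := by ext s; simp; tauto
      rw [this]
      exact (measurableSet_singleton _).union (measurableSet_singleton _)
    set φ : ℝ → ℝ := fun s => if s = 1 ∨ s = 9 then 1 else 0 with hφdef
    set ψ : ℝ → ℝ := fun s => if s = 4 ∨ s = 9 then 1 else 0 with hψdef
    have hφm : Measurable φ := Measurable.ite (hsor 1 9) measurable_const measurable_const
    have hψm : Measurable ψ := Measurable.ite (hsor 4 9) measurable_const measurable_const
    have hucomp : u = φ ∘ g := by
      funext ω
      simp only [hudef, hvdef, hgdef, Function.comp]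
      by_cases h0 : a < X₀ ω ∧ X₀ ω < β <;> by_cases h1 : a < X₁ ω ∧ X₁ ω < β <;>
        simp [hφdef, h0, h1] <;> norm_num
    have hvcomp : v = ψ ∘ g := by
      funext ω
      simp only [hudef, hvdef, hgdef, Function.comp]
      by_cases h0 : a < X₀ ω ∧ X₀ ω < β <;> by_cases h1 : a < X₁ ω ∧ X₁ ω < β <;>
        simp [hψdef, h0, h1] <;> norm_num
    have hu : AEMeasurable u P := hucomp ▸ hφm.comp_aemeasurable hgm
    have hv : AEMeasurable v P := hvcomp ▸ hψm.comp_aemeasurable hgm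
    have huint : Integrable u P := by
      refine Integrable.mono' (integrable_const (1:ℝ)) hu.aestronglyMeasurable ?_
      refine Filter.Eventually.of_forall fun ω => ?_
      simp only [hudef]; split_ifs <;> simp
    have hvint : Integrable v P := by
      refine Integrable.mono' (integrable_const (1:ℝ)) hv.aestronglyMeasurable ?_
      refine Filter.Eventually.of_forall fun ω => ?_
      simp only [hvdef]; split_ifs <;> simp
    have hmono : ∫ ω, g ω ∂P ≤ ∫ ω, (2 * u ω + 8 * v ω) ∂P := by
      refine integral_mono_of_nonneg (Filter.Eventually.of_forall fun ω => sq_nonneg _)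
        ((huint.const_mul 2).add (hvint.const_mul 8))
        (Filter.Eventually.of_forall fun ω => ?_)
      simp only [hgdef, hudef, hvdef]
      by_cases h0 : a < X₀ ω ∧ X₀ ω < β <;> by_cases h1 : a < X₁ ω ∧ X₁ ω < β <;>
        simp [h0, h1] <;> norm_num
    have hsplit2 : ∫ ω, (2 * u ω + 8 * v ω) ∂P = 2 * ∫ ω, u ω ∂P + 8 * ∫ ω, v ω ∂P := by
      rw [integral_add (huint.const_mul 2) (hvint.const_mul 8),
        integral_const_mul, integral_const_mul]
    have h1 := integral_indicator_bound P X₀ a β hab hu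
    have h2 := integral_indicator_bound P X₁ a β hab hv
    have hintu : 0 ≤ ∫ ω, u ω ∂P := by
      refine integral_nonneg fun ω => ?_
      simp only [hudef]; split_ifs <;> norm_num
    calc ∫ ω, g ω ∂P ≤ 2 * ∫ ω, u ω ∂P + 8 * ∫ ω, v ω ∂P := hsplit2 ▸ hmono
      _ ≤ _ := by linarith
  · rw [integral_non_aestronglyMeasurable (by exact hg)]
    nlinarith

end Aux

lemma pointwise_bracket (α θ t a β x y : ℝ) (hα : 0 < α) (hα1 : α < 1)
    (haθ : a < θ) (hat : a < t) (hθβ : θ ≤ β) (htβ : t ≤ β) :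
    |(α - if x < θ then (1:ℝ) else 0) * (α - if y < θ then (1:ℝ) else 0)
      - (α - if x < t then (1:ℝ) else 0) * (α - if y < t then (1:ℝ) else 0)|
      ≤ (if a < x ∧ x < β then (1:ℝ) else 0) + 2 * (if a < y ∧ y < β then (1:ℝ) else 0) := by
  classical
  have key : ∀ z : ℝ, ¬(a < z ∧ z < β) →
      ((if z < θ then (1:ℝ) else 0) = (if z < t then (1:ℝ) else 0)) := by
    intro z hz
    by_cases h1 : z < β
    · have hza : z ≤ a := by
        by_contra hc
        exact hz ⟨lt_of_not_ge hc, h1⟩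
      rw [if_pos (lt_of_le_of_lt hza haθ), if_pos (lt_of_le_of_lt hza hat)]
    · push_neg at h1
      rw [if_neg (not_lt.mpr (le_trans hθβ h1)), if_neg (not_lt.mpr (le_trans htβ h1))]
  set e1 := (if x < θ then (1:ℝ) else 0) with he1
  set e2 := (if y < θ then (1:ℝ) else 0) with he2
  set e3 := (if x < t then (1:ℝ) else 0) with he3
  set e4 := (if y < t then (1:ℝ) else 0) with he4
  set bx := (if a < x ∧ x < β then (1:ℝ) else 0) with hbx
  set by' := (if a < y ∧ y < β then (1:ℝ) else 0) with hby
  have hbx0 : 0 ≤ bx := by rw [hbx]; split_ifs <;> norm_num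
  have hby0 : 0 ≤ by' := by rw [hby]; split_ifs <;> norm_num
  have hx : |e3 - e1| ≤ bx := by
    by_cases h : a < x ∧ x < β
    · rw [hbx, if_pos h, he1, he3]; split_ifs <;> norm_num
    · rw [hbx, if_neg h, he1, he3, key x h, sub_self, abs_zero]
  have hy : |e4 - e2| ≤ by' := by
    by_cases h : a < y ∧ y < β
    · rw [hby, if_pos h, he2, he4]; split_ifs <;> norm_num
    · rw [hby, if_neg h, he2, he4, key y h, sub_self, abs_zero]
  have habs2 : |α - e2| ≤ 1 := by
    rw [he2]; split_ifs <;> rw [abs_le] <;> constructor <;> linarith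
  have habs3 : |α - e3| ≤ 1 := by
    rw [he3]; split_ifs <;> rw [abs_le] <;> constructor <;> linarith
  have hid : (α - e1) * (α - e2) - (α - e3) * (α - e4)
      = (e3 - e1) * (α - e2) + (α - e3) * (e4 - e2) := by ring
  rw [hid]
  calc |(e3 - e1) * (α - e2) + (α - e3) * (e4 - e2)|
      ≤ |(e3 - e1) * (α - e2)| + |(α - e3) * (e4 - e2)| := abs_add_le _ _
    _ = |e3 - e1| * |α - e2| + |α - e3| * |e4 - e2| := by rw [abs_mul, abs_mul]
    _ ≤ bx * 1 + 1 * by' :=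
        add_le_add (mul_le_mul hx habs2 (abs_nonneg _) hbx0)
          (mul_le_mul habs3 hy (abs_nonneg _) zero_le_one)
    _ ≤ bx + 2 * by' := by linarith

theorem quantilogram_bracketing_number
    {Ω : Type*} [MeasureSpace Ω] (P : Measure Ω) [IsProbabilityMeasure P]
    (X₀ X₁ : Ω → ℝ) (F : ℝ → ℝ) (Θ : Set ℝ) (hΘ : IsCompact Θ) (hΘne : Θ.Nonempty)
    (α L c d : ℝ) (hα : 0 < α) (hα1 : α < 1) (hL : 0 ≤ L)
    (hF0 : ∀ θ, F θ = (P {ω | X₀ ω ≤ θ}).toReal)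
    (hF1 : ∀ θ, F θ = (P {ω | X₁ ω ≤ θ}).toReal)
    (hsub : Θ ⊆ Set.Icc c d)
    (hLip : ∀ x ∈ Set.Icc c d, ∀ y ∈ Set.Icc c d, |F x - F y| ≤ L * |x - y|)
    (f : ℝ → ℝ → ℝ → ℝ)
    (hf : ∀ θ x y, f θ x y =
      (α - (if x < θ then (1:ℝ) else 0)) * (α - (if y < θ then (1:ℝ) else 0))) :
    ∃ C > 0, ∃ δ₀ > 0, ∀ δ : ℝ, 0 < δ → δ ≤ δ₀ →
      ∃ N : ℕ, (N : ℝ) ≤ C * δ ^ (-(2:ℝ)) ∧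
        ∃ (ts : Fin N → ℝ) (bs : Fin N → ℝ → ℝ → ℝ),
          (∀ k, ts k ∈ Θ) ∧
          (∀ k, (∫ ω, (bs k (X₀ ω) (X₁ ω)) ^ 2 ∂P) ^ ((1:ℝ)/2) ≤ δ) ∧
          (∀ θ ∈ Θ, ∃ k, ∀ x y : ℝ, |f θ x y - f (ts k) x y| ≤ bs k x y) := by
  classical
  obtain ⟨θs, hθs⟩ := hΘne
  have hcd : c ≤ d := le_trans (hsub hθs).1 (hsub hθs).2
  have hL1 : (0:ℝ) < 10 * L + 1 := by linarith
  refine ⟨(d - c) * (10 * L + 1) + 2, by nlinarith, 1, one_pos, ?_⟩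
  intro δ hδ hδ1
  set ε : ℝ := δ ^ 2 / (10 * L + 1) with hε
  have hεpos : 0 < ε := by positivity
  set M : ℕ := ⌈(d - c) / ε⌉₊ with hM
  have hδ2 : (0:ℝ) < δ ^ 2 := by positivity
  refine ⟨M + 1, ?_, ?_⟩
  · -- counting bound
    have h1 : (M : ℝ) ≤ (d - c) / ε + 1 :=
      le_of_lt (Nat.ceil_lt_add_one (div_nonneg (by linarith) hεpos.le))
    have h2 : δ ^ (-(2:ℝ)) = (δ ^ 2)⁻¹ := by
      rw [Real.rpow_neg hδ.le, ← Real.rpow_natCast δ 2]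
      norm_num
    have hdiv : (d - c) / ε = (d - c) * (10 * L + 1) / δ ^ 2 := by
      rw [hε, div_div_eq_mul_div]
    have h3 : (2:ℝ) ≤ 2 / δ ^ 2 := by
      rw [le_div_iff₀ hδ2]; nlinarith
    push_cast
    rw [h2]
    have : ((d - c) * (10 * L + 1) + 2) * (δ ^ 2)⁻¹
        = (d - c) * (10 * L + 1) / δ ^ 2 + 2 / δ ^ 2 := by ring
    rw [this]
    rw [hdiv] at h1
    linarith
  · -- construction
    set A : ℕ → ℝ := fun j => c + ((j : ℝ) - 1) * ε with hA
    set B : ℕ → ℝ := fun j => min d (c + (j : ℝ) * ε) with hB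
    set cond : Fin (M + 1) → Prop :=
      fun k => 0 < k.1 ∧ (Θ ∩ Set.Ioc (A k.1) (c + (k.1 : ℝ) * ε)).Nonempty with hcond
    refine ⟨fun k => if h : cond k then h.2.choose else (if c ∈ Θ then c else θs),
      fun k => if cond k then
        (fun x y => (if A k.1 < x ∧ x < B k.1 then (1:ℝ) else 0)
          + 2 * (if A k.1 < y ∧ y < B k.1 then (1:ℝ) else 0))
        else (fun _ _ => 0), ?_, ?_, ?_⟩
    · intro k
      by_cases h : cond k
      · simp only [dif_pos h]
        exact h.2.choose_spec.1
      · simp only [dif_neg h]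
        split_ifs with hc
        · exact hc
        · exact hθs
    · intro k
      by_cases h : cond k
      · simp only [if_pos h]
        obtain ⟨hk0, t', ht'Θ, ht'I⟩ := h
        have hk1 : (1:ℝ) ≤ (k.1 : ℝ) := by exact_mod_cast hk0
        have hac : c ≤ A k.1 := by
          simp only [hA]
          nlinarith
        have ht'd : t' ≤ d := (hsub ht'Θ).2
        have haB : A k.1 < B k.1 := by
          simp only [hB, lt_min_iff]
          constructor
          · exact lt_of_lt_of_le ht'I.1 ht'd
          · simp only [hA]; nlinarith
        have hBd : B k.1 ≤ d := min_le_left _ _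
        have hBc : c ≤ B k.1 := by
          simp only [hB, le_min_iff]
          constructor
          · exact hcd
          · nlinarith
        have hBA : B k.1 - A k.1 ≤ ε := by
          have : B k.1 ≤ c + (k.1 : ℝ) * ε := min_le_right _ _
          simp only [hA]; linarith [this]
        have hint := bracket_integral_bound P X₀ X₁ (A k.1) (B k.1) haB.le
        rw [← hF0, ← hF0, ← hF1, ← hF1] at hint
        have hLb : F (B k.1) - F (A k.1) ≤ L * ε := by
          have := hLip (B k.1) ⟨hBc, hBd⟩ (A k.1) ⟨hac, le_trans haB.le hBd⟩
          rw [abs_le] at this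
          have habs : |B k.1 - A k.1| = B k.1 - A k.1 := abs_of_nonneg (by linarith)
          rw [habs] at this
          nlinarith [this.2]
        have hfin : ∫ ω, ((if A k.1 < X₀ ω ∧ X₀ ω < B k.1 then (1:ℝ) else 0)
            + 2 * (if A k.1 < X₁ ω ∧ X₁ ω < B k.1 then (1:ℝ) else 0)) ^ 2 ∂P ≤ δ ^ 2 := by
          have hεδ : 10 * (L * ε) ≤ δ ^ 2 := by
            rw [hε]
            rw [div_eq_iff (ne_of_gt hL1)] at *
            have : 10 * (L * (δ ^ 2 / (10 * L + 1))) = δ ^ 2 * (10 * L) / (10 * L + 1) := by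
              ring
            rw [this, div_le_iff₀ hL1]
            nlinarith
          linarith
        have h0 : 0 ≤ ∫ ω, ((if A k.1 < X₀ ω ∧ X₀ ω < B k.1 then (1:ℝ) else 0)
            + 2 * (if A k.1 < X₁ ω ∧ X₁ ω < B k.1 then (1:ℝ) else 0)) ^ 2 ∂P :=
          integral_nonneg fun ω => sq_nonneg _
        show (∫ ω, ((if A k.1 < X₀ ω ∧ X₀ ω < B k.1 then (1:ℝ) else 0)
            + 2 * (if A k.1 < X₁ ω ∧ X₁ ω < B k.1 then (1:ℝ) else 0)) ^ 2 ∂P) ^ ((1:ℝ)/2) ≤ δ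
        calc (∫ ω, ((if A k.1 < X₀ ω ∧ X₀ ω < B k.1 then (1:ℝ) else 0)
            + 2 * (if A k.1 < X₁ ω ∧ X₁ ω < B k.1 then (1:ℝ) else 0)) ^ 2 ∂P) ^ ((1:ℝ)/2)
            ≤ (δ ^ 2) ^ ((1:ℝ)/2) := Real.rpow_le_rpow h0 hfin (by norm_num)
          _ = δ := by
              rw [← Real.rpow_natCast δ 2, ← Real.rpow_mul hδ.le]
              norm_num
      · simp only [if_neg h]
        show (∫ ω, ((0:ℝ)) ^ 2 ∂P) ^ ((1:ℝ)/2) ≤ δ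
        rw [show ((0:ℝ)) ^ 2 = 0 by norm_num, integral_zero,
          Real.zero_rpow (by norm_num : (1:ℝ)/2 ≠ 0)]
        exact hδ.le
    · intro θ hθ
      by_cases hθc : θ ≤ c
      · have hθeq : θ = c := le_antisymm hθc (hsub hθ).1
        refine ⟨⟨0, Nat.succ_pos M⟩, ?_⟩
        have hcond0 : ¬ cond ⟨0, Nat.succ_pos M⟩ := by
          simp [hcond]
        intro x y
        simp only [if_neg hcond0, dif_neg hcond0]
        rw [if_pos (hθeq ▸ hθ), hθeq]
        simp
      · push_neg at hθc
        have hθd : θ ≤ d := (hsub hθ).2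
        set j : ℕ := ⌈(θ - c) / ε⌉₊ with hj
        have hy0 : (0:ℝ) < (θ - c) / ε := div_pos (by linarith) hεpos
        have hj1 : 0 < j := Nat.ceil_pos.mpr hy0
        have hjM : j ≤ M := Nat.ceil_le_ceil (by
          apply div_le_div_of_nonneg_right _ hεpos.le
          linarith)
        have hjlt : j < M + 1 := by omega
        have hθupper : θ ≤ c + (j : ℝ) * ε := by
          have := Nat.le_ceil ((θ - c) / ε)
          rw [← hj] at this
          have := (div_le_iff₀ hεpos).mp this
          linarith
        have hθlower : A j < θ := by
          have hcl := Nat.ceil_lt_add_one hy0.le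
          rw [← hj] at hcl
          have h' : ((j:ℝ) - 1) < (θ - c) / ε := by linarith
          have h'' := (lt_div_iff₀ hεpos).mp h'
          simp only [hA]
          linarith
        have hcondj : cond ⟨j, hjlt⟩ := ⟨hj1, ⟨θ, hθ, hθlower, hθupper⟩⟩
        refine ⟨⟨j, hjlt⟩, ?_⟩
        intro x y
        simp only [if_pos hcondj, dif_pos hcondj]
        obtain ⟨htΘ, htlow, htup⟩ := hcondj.2.choose_spec
        set t := hcondj.2.choose with ht
        have htd : t ≤ d := (hsub htΘ).2
        rw [hf, hf]
        exact pointwise_bracket α θ t (A j) (B j) x y hα hα1 hθlower htlow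
          (le_min hθd hθupper) (le_min htd htup)
end
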